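/- arXiv:1910.10359 — 4 statements merged into one kernel-verified Lean document; each statement's English description precedes it below -/
import Mathlib

section
/- For any multigraph G on n vertices with m edges and any c ≥ 0, there exists a subgraph H of G on the same vertex set with at most c(n−1) edges such that G and H are (V(G), c)-cut-equivalent, i.e., for every cut (A, V∖A), min{c, |∂_G(A)|} = min{c, |∂_H(A)|}. (H is obtained by taking the union of c successively removed maximal spanning forests of G.) -/
open Set Relation

/-- An edge `e` crosses the vertex set `A` if exactly one of its endpoints lies in `A`. -/
def crosses {V ι : Type*} (ends : ι → V × V) (A : Set V) (e : ι) : Prop :=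
  ((ends e).1 ∈ A ∧ (ends e).2 ∉ A) ∨ ((ends e).1 ∉ A ∧ (ends e).2 ∈ A)

/-- The boundary `∂(A)`: edges of `E` with exactly one endpoint in `A`. -/
def bdry {V ι : Type*} (ends : ι → V × V) (E : Set ι) (A : Set V) : Set ι :=
  {e ∈ E | crosses ends A e}

/-- `Mincut(G, S₁, S₂)`: the minimum size of an edge cut separating `S₁` from `S₂`
(`⊤` if `S₁` and `S₂` cannot be separated). -/
noncomputable def mincut {V ι : Type*} (ends : ι → V × V) (E : Set ι)
    (S1 S2 : Set V) : ℕ∞ :=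
  sInf {n : ℕ∞ | ∃ A : Set V, S1 ⊆ A ∧ A ∩ S2 = ∅ ∧ n = ((bdry ends E A).ncard : ℕ∞)}

/-- Adjacency in the multigraph with edge set `E`. -/
def adj {V ι : Type*} (ends : ι → V × V) (E : Set ι) (a b : V) : Prop :=
  ∃ e ∈ E, ends e = (a, b) ∨ ends e = (b, a)

section helpers

variable {V ι : Type*} {ends : ι → V × V}

lemma adj_symm {E : Set ι} {a b : V} (h : adj ends E a b) : adj ends E b a := by
  obtain ⟨e, he, h | h⟩ := h
  exacts [⟨e, he, Or.inr h⟩, ⟨e, he, Or.inl h⟩]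

lemma rr_symm {E : Set ι} {a b : V} (h : ReflTransGen (adj ends E) a b) :
    ReflTransGen (adj ends E) b a :=
  haveI : Std.Symm (adj ends E) := ⟨fun _ _ => adj_symm⟩; Std.Symm.symm _ _ h

lemma rr_mono {E' E : Set ι} (hE : E' ⊆ E) {a b : V}
    (h : ReflTransGen (adj ends E') a b) : ReflTransGen (adj ends E) a b :=
  ReflTransGen.mono (fun _ _ ⟨e, he, h2⟩ => ⟨e, hE he, h2⟩) _ _ h

lemma adj_self {E : Set ι} {e : ι} (he : e ∈ E) :
    adj ends E (ends e).1 (ends e).2 :=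
  ⟨e, he, Or.inl rfl⟩

lemma rr_insert_decomp {e : ι} {s : Set ι} {x y : V}
    (h : ReflTransGen (adj ends (insert e s)) x y) :
    ReflTransGen (adj ends s) x y ∨
    (ReflTransGen (adj ends s) x (ends e).1 ∧ ReflTransGen (adj ends s) (ends e).2 y) ∨
    (ReflTransGen (adj ends s) x (ends e).2 ∧ ReflTransGen (adj ends s) (ends e).1 y) := by
  induction h with
  | refl => exact Or.inl .refl
  | @tail b c _ hbc ih =>
    obtain ⟨f, hf, hends⟩ := hbc
    rcases Set.mem_insert_iff.mp hf with rfl | hfs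
    · rcases hends with h' | h'
      · have hb : b = (ends f).1 := by rw [h']
        have hc : c = (ends f).2 := by rw [h']
        subst hb; subst hc
        rcases ih with h1 | ⟨h1, h2⟩ | ⟨h1, h2⟩
        · exact Or.inr (Or.inl ⟨h1, .refl⟩)
        · exact Or.inl (h1.trans (rr_symm h2))
        · exact Or.inl h1
      · have hb : b = (ends f).2 := by rw [h']
        have hc : c = (ends f).1 := by rw [h']
        subst hb; subst hc
        rcases ih with h1 | ⟨h1, h2⟩ | ⟨h1, h2⟩
        · exact Or.inr (Or.inr ⟨h1, .refl⟩)
        · exact Or.inl h1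
        · exact Or.inl (h1.trans (rr_symm h2))
    · have hstep : adj ends s b c := ⟨f, hfs, hends⟩
      rcases ih with h1 | ⟨h1, h2⟩ | ⟨h1, h2⟩
      · exact Or.inl (h1.tail hstep)
      · exact Or.inr (Or.inl ⟨h1, h2.tail hstep⟩)
      · exact Or.inr (Or.inr ⟨h1, h2.tail hstep⟩)

lemma rr_insert_of_conn {e : ι} {s : Set ι}
    (hconn : ReflTransGen (adj ends s) (ends e).1 (ends e).2) {x y : V} :
    ReflTransGen (adj ends (insert e s)) x y ↔ ReflTransGen (adj ends s) x y := by
  constructor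
  · intro h
    rcases rr_insert_decomp h with h1 | ⟨h1, h2⟩ | ⟨h1, h2⟩
    · exact h1
    · exact (h1.trans hconn).trans h2
    · exact (h1.trans (rr_symm hconn)).trans h2
  · exact rr_mono (Set.subset_insert e s)

end helpers

lemma exists_good_forest {V ι : Type*} [Finite V] [Finite ι] (ends : ι → V × V) (E : Set ι) :
    ∃ F ⊆ E, ∃ R : Set V,
      (∀ a b : V, ReflTransGen (adj ends F) a b ↔ ReflTransGen (adj ends E) a b) ∧
      F.ncard + R.ncard ≤ Nat.card V ∧
      (∀ v : V, ∃ x ∈ R, ReflTransGen (adj ends E) v x) ∧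
      (∀ x ∈ R, ∀ y ∈ R, ReflTransGen (adj ends E) x y → x = y) := by
  induction E, (Set.toFinite E) using Set.Finite.induction_on with
  | empty =>
    refine ⟨∅, Subset.rfl, Set.univ, fun a b => Iff.rfl, ?_, fun v => ⟨v, mem_univ v, .refl⟩, ?_⟩
    · simp [Set.ncard_univ]
    · intro x _ y _ h
      induction h with
      | refl => rfl
      | tail _ hstep ih =>
        obtain ⟨e, he, _⟩ := hstep
        exact absurd he (Set.notMem_empty e)
  | @insert e s hes hsfin ih =>
    obtain ⟨F', hF'sub, R', hiff, hcount, hrep, hinj⟩ := ih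
    by_cases hconn : ReflTransGen (adj ends s) (ends e).1 (ends e).2
    · refine ⟨F', hF'sub.trans (Set.subset_insert e s), R',
        fun a b => (hiff a b).trans (rr_insert_of_conn hconn).symm, hcount, ?_, ?_⟩
      · intro v
        obtain ⟨x, hx, hxr⟩ := hrep v
        exact ⟨x, hx, rr_mono (Set.subset_insert e s) hxr⟩
      · intro x hx y hy h
        exact hinj x hx y hy ((rr_insert_of_conn hconn).mp h)
    · obtain ⟨xu, hxuR, hxu⟩ := hrep (ends e).1
      obtain ⟨xv, hxvR, hxv⟩ := hrep (ends e).2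
      have hne : xu ≠ xv := by
        rintro rfl
        exact hconn (hxu.trans (rr_symm hxv))
      have heF' : e ∉ F' := fun h => hes (hF'sub h)
      have hestep : adj ends (insert e F') (ends e).1 (ends e).2 :=
        adj_self (Set.mem_insert e F')
      refine ⟨insert e F', Set.insert_subset_insert hF'sub, R' \ {xv}, ?_, ?_, ?_, ?_⟩
      · intro a b
        constructor
        · exact rr_mono (Set.insert_subset_insert hF'sub)
        · intro h
          rcases rr_insert_decomp h with h1 | ⟨h1, h2⟩ | ⟨h1, h2⟩
          · exact rr_mono (Set.subset_insert e F') ((hiff a b).mpr h1)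
          · exact (rr_mono (Set.subset_insert e F') ((hiff _ _).mpr h1)).trans
              ((ReflTransGen.single hestep).trans
                (rr_mono (Set.subset_insert e F') ((hiff _ _).mpr h2)))
          · exact (rr_mono (Set.subset_insert e F') ((hiff _ _).mpr h1)).trans
              ((ReflTransGen.single (adj_symm hestep)).trans
                (rr_mono (Set.subset_insert e F') ((hiff _ _).mpr h2)))
      · have h1 : (insert e F').ncard = F'.ncard + 1 :=
          Set.ncard_insert_of_notMem heF' (Set.toFinite F')
        have h2 : (R' \ {xv}).ncard = R'.ncard - 1 :=
          Set.ncard_diff_singleton_of_mem hxvR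
        have h3 : 0 < R'.ncard := (Set.ncard_pos (Set.toFinite R')).mpr ⟨xv, hxvR⟩
        omega
      · intro w
        obtain ⟨x, hx, hxr⟩ := hrep w
        by_cases hxxv : x = xv
        · subst hxxv
          refine ⟨xu, ⟨hxuR, hne⟩, ?_⟩
          have : ReflTransGen (adj ends (insert e s)) w (ends e).2 :=
            (rr_mono (Set.subset_insert e s) hxr).trans
              (rr_mono (Set.subset_insert e s) (rr_symm hxv))
          exact (this.tail (adj_symm (adj_self (Set.mem_insert e s)))).trans
            (rr_mono (Set.subset_insert e s) hxu)
        · exact ⟨x, ⟨hx, hxxv⟩, rr_mono (Set.subset_insert e s) hxr⟩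
      · rintro x ⟨hx, hx2⟩ y ⟨hy, hy2⟩ h
        rcases rr_insert_decomp h with h1 | ⟨h1, h2⟩ | ⟨h1, h2⟩
        · exact hinj x hx y hy h1
        · exact absurd (hinj y hy xv hxvR ((rr_symm h2).trans hxv)) hy2
        · exact absurd (hinj x hx xv hxvR (h1.trans hxv)) hx2
section cuts

variable {V ι : Type*} {ends : ι → V × V}

lemma bdry_subset_bdry {E' E : Set ι} (h : E' ⊆ E) (A : Set V) :
    bdry ends E' A ⊆ bdry ends E A := fun e ⟨he, hc⟩ => ⟨h he, hc⟩

lemma bdry_union (E1 E2 : Set ι) (A : Set V) :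
    bdry ends (E1 ∪ E2) A = bdry ends E1 A ∪ bdry ends E2 A := by
  ext f
  simp only [bdry, Set.mem_sep_iff, Set.mem_union]
  constructor
  · rintro ⟨h1 | h1, h2⟩
    exacts [Or.inl ⟨h1, h2⟩, Or.inr ⟨h1, h2⟩]
  · rintro (⟨h1, h2⟩ | ⟨h1, h2⟩)
    exacts [⟨Or.inl h1, h2⟩, ⟨Or.inr h1, h2⟩]

lemma cross_of_reach {F : Set ι} {A : Set V} {a b : V}
    (h : ReflTransGen (adj ends F) a b) (ha : a ∈ A) (hb : b ∉ A) :
    (bdry ends F A).Nonempty := by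
  induction h with
  | refl => exact absurd ha hb
  | @tail p q hp hpq ih =>
    by_cases hpA : p ∈ A
    · obtain ⟨f, hf, hends | hends⟩ := hpq
      · exact ⟨f, hf, Or.inl ⟨by rw [hends]; exact hpA, by rw [hends]; exact hb⟩⟩
      · exact ⟨f, hf, Or.inr ⟨by rw [hends]; exact hb, by rw [hends]; exact hpA⟩⟩
    · exact ih hpA

lemma bdry_nonempty_of_reach_eq {F E : Set ι}
    (hiff : ∀ a b : V, ReflTransGen (adj ends F) a b ↔ ReflTransGen (adj ends E) a b)
    {A : Set V} (h : (bdry ends E A).Nonempty) : (bdry ends F A).Nonempty := by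
  obtain ⟨e, he, hc⟩ := h
  have hstep : ReflTransGen (adj ends E) (ends e).1 (ends e).2 :=
    ReflTransGen.single (adj_self he)
  rcases hc with ⟨h1, h2⟩ | ⟨h1, h2⟩
  · exact cross_of_reach ((hiff _ _).mpr hstep) h1 h2
  · exact cross_of_reach ((hiff _ _).mpr (rr_symm hstep)) h2 h1

end cuts


/-- sparsification, Nagamochi–Ibaraki style: for any multigraph `G` on
`n` vertices and any `c ≥ 0`, there is a sub-edge-set `E' ⊆ E` with `|E'| ≤ c(n-1)` such
that every cut value, capped at `c`, is the same in `G` and in the subgraph `H = (V, E')`. -/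
theorem exists_sparse_cut_equivalent {V ι : Type*} [Finite V] [Finite ι] [Nonempty V]
    (ends : ι → V × V) (E : Set ι) (c : ℕ) :
    ∃ E' ⊆ E, E'.ncard ≤ c * (Nat.card V - 1) ∧
      ∀ A : Set V, min c (bdry ends E A).ncard = min c (bdry ends E' A).ncard := by
  induction c generalizing E with
  | zero => exact ⟨∅, Set.empty_subset E, by simp, fun A => by simp⟩
  | succ c ih =>
    obtain ⟨F, hFsub, R, hiff, hcount, hrep, _⟩ := exists_good_forest ends E
    have hR1 : 1 ≤ R.ncard := by
      obtain ⟨x, hx, _⟩ := hrep (Classical.arbitrary V)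
      exact (Set.ncard_pos (Set.toFinite R)).mpr ⟨x, hx⟩
    have hFle : F.ncard ≤ Nat.card V - 1 := by
      have h1 : 0 < Nat.card V := Nat.card_pos
      omega
    obtain ⟨E'', hE''sub, hE''card, hE''cut⟩ := ih (E \ F)
    refine ⟨E'' ∪ F, Set.union_subset (hE''sub.trans (Set.diff_subset)) hFsub, ?_, ?_⟩
    · have hd : Disjoint E'' F :=
        Set.disjoint_of_subset_left hE''sub Set.disjoint_sdiff_left
      rw [Set.ncard_union_eq hd (Set.toFinite E'') (Set.toFinite F)]
      calc E''.ncard + F.ncard ≤ c * (Nat.card V - 1) + (Nat.card V - 1) := by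
            exact Nat.add_le_add hE''card hFle
        _ = (c + 1) * (Nat.card V - 1) := by ring
    · intro A
      have hdc : Disjoint (E \ F) F := Set.disjoint_sdiff_left
      have hdc' : Disjoint E'' F :=
        Set.disjoint_of_subset_left hE''sub Set.disjoint_sdiff_left
      have hEeq : E = (E \ F) ∪ F := (Set.diff_union_of_subset hFsub).symm
      have hbE : (bdry ends E A).ncard
          = (bdry ends (E \ F) A).ncard + (bdry ends F A).ncard := by
        conv_lhs => rw [hEeq]
        rw [bdry_union]
        exact Set.ncard_union_eq
          (Set.disjoint_of_subset (bdry_subset_bdry Set.Subset.rfl A |>.trans (fun x hx => hx.1))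
            (fun x hx => hx.1) hdc |>.mono (fun x hx => hx) (fun x hx => hx))
          (Set.toFinite _) (Set.toFinite _)
      have hbE' : (bdry ends (E'' ∪ F) A).ncard
          = (bdry ends E'' A).ncard + (bdry ends F A).ncard := by
        rw [bdry_union]
        exact Set.ncard_union_eq
          (hdc'.mono (fun x hx => hx.1) (fun x hx => hx.1))
          (Set.toFinite _) (Set.toFinite _)
      have hx := hE''cut A
      have hzero : (bdry ends F A).ncard = 0 →
          (bdry ends (E \ F) A).ncard = 0 ∧ (bdry ends E'' A).ncard = 0 := by
        intro hf0
        have hFempty : bdry ends F A = ∅ :=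
          (Set.ncard_eq_zero (Set.toFinite _)).mp hf0
        have hEempty : bdry ends E A = ∅ := by
          by_contra hne
          obtain ⟨x, hxmem⟩ := bdry_nonempty_of_reach_eq hiff
            (Set.nonempty_iff_ne_empty.mpr hne)
          rw [hFempty] at hxmem
          exact hxmem
        constructor
        · rw [Set.ncard_eq_zero (Set.toFinite _), ← Set.subset_empty_iff, ← hEempty]
          exact bdry_subset_bdry Set.diff_subset A
        · rw [Set.ncard_eq_zero (Set.toFinite _), ← Set.subset_empty_iff, ← hEempty]
          exact bdry_subset_bdry (hE''sub.trans Set.diff_subset) A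
      omega
end

section
/- Let G = (V, E) be a connected multigraph with terminal set S, and suppose F ⊆ E contains all (S, c)-cuts. Then the contracted graph H = G/(E ∖ F) is (S, c)-cut-equivalent to G and has at most |F| + 1 vertices. -/
open Set Relation

/-- Two multigraphs `G` (on vertices `V`, edges `EG`) and `H` (on `W`, edges `EH`), both
containing the terminals `T` via the maps `tG`, `tH`, are `(S, c)`-cut-equivalent if for
every partition of the terminals, the min-cut values between the two sides, capped at `c`,
agree in `G` and `H`. -/
def CutEquiv {V W ι κ T : Type*} (endsG : ι → V × V) (EG : Set ι) (tG : T → V)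
    (endsH : κ → W × W) (EH : Set κ) (tH : T → W) (c : ℕ) : Prop :=
  ∀ P : T → Prop,
    min (c : ℕ∞) (mincut endsG EG (tG '' {t | P t}) (tG '' {t | ¬ P t})) =
    min (c : ℕ∞) (mincut endsH EH (tH '' {t | P t}) (tH '' {t | ¬ P t}))

/-- `F` contains all `(S, c)`-cuts: for every partition `S = S₁ ⊎ S₂` whose min-cut value
`ĉ` is at most `c`, some subset of `F` of size `ĉ` is an edge cut separating `S₁`
from `S₂`. -/
def ContainsCuts {V ι : Type*} (ends : ι → V × V) (E F : Set ι) (S : Set V) (c : ℕ) : Prop :=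
  ∀ S1 S2 : Set V, S1 ∪ S2 = S → Disjoint S1 S2 → mincut ends E S1 S2 ≤ (c : ℕ∞) →
    ∃ F' ⊆ F, (F'.ncard : ℕ∞) = mincut ends E S1 S2 ∧
      ∃ A : Set V, S1 ⊆ A ∧ A ∩ S2 = ∅ ∧ bdry ends E A = F'

/-- The relation on vertices identifying the endpoints of each edge in `F`. -/
def contractRel {V ι : Type*} (ends : ι → V × V) (F : Set ι) (a b : V) : Prop :=
  ∃ e ∈ F, ends e = (a, b)

/-- The quotient map `V → V(G/F)` contracting all edges of `F`. -/
def contractMap {V ι : Type*} (ends : ι → V × V) (F : Set ι) :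
    V → Quotient (Relation.EqvGen.setoid (contractRel ends F)) :=
  Quotient.mk _

lemma exists_ne_step {W : Type*} {r : W → W → Prop} {a b : W}
    (h : Relation.ReflTransGen r a b) : a ≠ b → ∃ x y, r x y ∧ x ≠ y := by
  induction h with
  | refl => exact fun hab => absurd rfl hab
  | @tail c d h1 step ih =>
    intro hab
    by_cases hcb : c = d
    · exact ih (fun h => hab (h.trans hcb))
    · exact ⟨_, _, step, hcb⟩

lemma card_le_of_conn {κ : Type*} [Finite κ] :
    ∀ n : ℕ, ∀ (W : Type*) [Finite W], Nat.card W ≤ n →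
      ∀ (f : κ → W × W) (F : Set κ),
      (∀ a b : W, Relation.ReflTransGen (fun a b => ∃ e ∈ F, f e = (a, b) ∨ f e = (b, a)) a b) →
      Nat.card W ≤ F.ncard + 1 := by
  intro n
  induction n with
  | zero => intro W _ hcard f F _; omega
  | succ n ih =>
    intro W _ hcard f F hconn
    by_cases h1 : Nat.card W ≤ 1
    · omega
    have _ := Fintype.ofFinite W
    have hcf : Nat.card W = Fintype.card W := Nat.card_eq_fintype_card
    have hnt : Nontrivial W := Fintype.one_lt_card_iff_nontrivial.1 (by omega)
    obtain ⟨a, b, hab⟩ := hnt.exists_pair_ne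
    obtain ⟨x, y, ⟨e, heF, hfe⟩, hxy⟩ := exists_ne_step (hconn a b) hab
    obtain ⟨x0, y0, hfe0⟩ : ∃ p q, f e = (p, q) := ⟨_, _, rfl⟩
    have hxy0 : x0 ≠ y0 := by
      rcases hfe with h | h <;> rw [hfe0] at h <;> injection h with h1 h2 <;>
        subst h1 <;> subst h2 <;> first | exact hxy | exact hxy.symm
    classical
    let W' := {w : W // w ≠ y0}
    let g : W → W' := fun w => if h : w = y0 then ⟨x0, hxy0⟩ else ⟨w, h⟩
    have hgy : g y0 = ⟨x0, hxy0⟩ := dif_pos rfl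
    have hgne : ∀ (w : W) (h : w ≠ y0), g w = ⟨w, h⟩ := fun w h => dif_neg h
    have hgxy : g x0 = g y0 := by rw [hgy, hgne x0 hxy0]
    have hg : ∀ w : W', g w.val = w := fun w => by rw [hgne w.val w.2]
    let f' : κ → W' × W' := fun e0 => (g (f e0).1, g (f e0).2)
    let F' : Set κ := F \ {e}
    have hstep : ∀ u v : W, (∃ e0 ∈ F, f e0 = (u, v) ∨ f e0 = (v, u)) →
        Relation.ReflTransGen
          (fun a b => ∃ e0 ∈ F', f' e0 = (a, b) ∨ f' e0 = (b, a)) (g u) (g v) := by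
      rintro u v ⟨e0, he0F, he0⟩
      by_cases he0e : e0 = e
      · subst he0e
        have : g u = g v := by
          rcases he0 with h | h <;> rw [hfe0] at h <;> injection h with h1 h2 <;>
            rw [← h1, ← h2]
          · exact hgxy
          · exact hgxy.symm
        rw [this]
      · refine Relation.ReflTransGen.single ⟨e0, ⟨he0F, he0e⟩, ?_⟩
        rcases he0 with h | h
        · left; simp [f', h]
        · right; simp [f', h]
    have hconn' : ∀ a' b' : W',
        Relation.ReflTransGen
          (fun a b => ∃ e0 ∈ F', f' e0 = (a, b) ∨ f' e0 = (b, a)) a' b' := by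
      have hmap : ∀ u v : W, Relation.ReflTransGen
          (fun a b => ∃ e0 ∈ F, f e0 = (a, b) ∨ f e0 = (b, a)) u v →
          Relation.ReflTransGen
          (fun a b => ∃ e0 ∈ F', f' e0 = (a, b) ∨ f' e0 = (b, a)) (g u) (g v) := by
        intro u v h
        induction h with
        | refl => exact .refl
        | tail h1 step ih2 => exact ih2.trans (hstep _ _ step)
      intro a' b'
      have := hmap a'.val b'.val (hconn _ _)
      rwa [hg, hg] at this
    have hcard' : Nat.card W' = Nat.card W - 1 := by
      have h0 : Nat.card W' = Nat.card {w : W // ¬ w = y0} := rfl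
      rw [h0, Nat.card_eq_fintype_card, hcf]
      convert Fintype.card_subtype_compl (· = y0) using 2
      convert (Fintype.card_subtype_eq y0).symm
    have hFfin : F.Finite := Set.toFinite F
    have hF1 : 1 ≤ F.ncard := (Set.ncard_pos hFfin).2 ⟨e, heF⟩
    have hF' : F'.ncard = F.ncard - 1 := Set.ncard_diff_singleton_of_mem heF
    have := ih W' (by omega) f' F' hconn'
    omega

lemma mincut_le_quotient {V ι : Type*} (ends : ι → V × V) (E : Set ι) (D : Set ι)
    (S1 S2 : Set V) :
    mincut ends E S1 S2 ≤
      mincut (fun e => (contractMap ends D (ends e).1, contractMap ends D (ends e).2)) E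
        (contractMap ends D '' S1) (contractMap ends D '' S2) := by
  apply le_sInf
  rintro n ⟨A', hA1, hA2, rfl⟩
  apply sInf_le
  refine ⟨contractMap ends D ⁻¹' A', ?_, ?_, ?_⟩
  · intro s hs; exact hA1 (Set.mem_image_of_mem _ hs)
  · ext v
    simp only [Set.mem_inter_iff, Set.mem_preimage, Set.mem_empty_iff_false, iff_false, not_and]
    intro hv hv2
    have : contractMap ends D v ∈ A' ∩ (contractMap ends D '' S2) :=
      ⟨hv, Set.mem_image_of_mem _ hv2⟩
    rw [hA2] at this
    exact this
  · congr 1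

/-- if `G` is a connected multigraph with terminals `S` and `F ⊆ E`
contains all `(S, c)`-cuts, then the contraction `H = G/(E ∖ F)` is `(S, c)`-cut-equivalent
to `G` and has at most `|F| + 1` vertices. -/
theorem contract_containing_edges {V ι : Type*} [Finite V] [Finite ι]
    (ends : ι → V × V) (E : Set ι) (S : Set V) (c : ℕ) (F : Set ι) (hFE : F ⊆ E)
    (hconn : ∀ a b : V, Relation.ReflTransGen (adj ends E) a b)
    (hcontain : ContainsCuts ends E F S c) :
    CutEquiv ends E (fun t : ↥S => (t : V))
      (fun e => (contractMap ends (E \ F) (ends e).1, contractMap ends (E \ F) (ends e).2))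
      E (fun t : ↥S => contractMap ends (E \ F) (t : V)) c ∧
    Nat.card (Quotient (Relation.EqvGen.setoid (contractRel ends (E \ F)))) ≤
      F.ncard + 1 := by
  classical
  set r := contractRel ends (E \ F) with hr
  set π := contractMap ends (E \ F) with hπ
  set endsH := fun e => (π (ends e).1, π (ends e).2) with hendsH
  constructor
  · intro P
    set S1 : Set V := (fun t : ↥S => (t : V)) '' {t | P t} with hS1
    set S2 : Set V := (fun t : ↥S => (t : V)) '' {t | ¬ P t} with hS2
    have himg1 : (fun t : ↥S => π (t : V)) '' {t | P t} = π '' S1 := by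
      rw [hS1, Set.image_image]
    have himg2 : (fun t : ↥S => π (t : V)) '' {t | ¬ P t} = π '' S2 := by
      rw [hS2, Set.image_image]
    rw [himg1, himg2]
    have hle : mincut ends E S1 S2 ≤ mincut endsH E (π '' S1) (π '' S2) :=
      mincut_le_quotient ends E (E \ F) S1 S2
    by_cases hc : mincut ends E S1 S2 ≤ (c : ℕ∞)
    · have hunion : S1 ∪ S2 = S := by
        ext v
        simp only [hS1, hS2, Set.mem_union, Set.mem_image, Set.mem_setOf_eq]
        constructor
        · rintro (⟨t, _, rfl⟩ | ⟨t, _, rfl⟩) <;> exact t.2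
        · intro hv
          by_cases hP : P ⟨v, hv⟩
          · exact Or.inl ⟨⟨v, hv⟩, hP, rfl⟩
          · exact Or.inr ⟨⟨v, hv⟩, hP, rfl⟩
      have hdisj : Disjoint S1 S2 := by
        rw [Set.disjoint_left]
        rintro v ⟨t, ht, rfl⟩ ⟨u, hu, huv⟩
        exact hu (Subtype.ext huv ▸ ht)
      obtain ⟨F', hF'F, hFcard, A, hS1A, hAS2, hbdry⟩ := hcontain S1 S2 hunion hdisj hc
      have hsat : ∀ u v : V, Relation.EqvGen r u v → (u ∈ A ↔ v ∈ A) := by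
        intro u v h
        induction h with
        | rel u v huv =>
          obtain ⟨e, heD, hends⟩ := huv
          by_contra hne
          have hcr : crosses ends A e := by
            unfold crosses
            rw [hends]
            tauto
          have hmem : e ∈ bdry ends E A := ⟨heD.1, hcr⟩
          rw [hbdry] at hmem
          exact heD.2 (hF'F hmem)
        | refl => exact Iff.rfl
        | symm _ _ _ ih => exact ih.symm
        | trans _ _ _ _ _ ih1 ih2 => exact ih1.trans ih2
      have hkey : ∀ v : V, π v ∈ π '' A ↔ v ∈ A := by
        intro v
        constructor
        · rintro ⟨a, haA, hpa⟩
          exact (hsat a v (Quotient.exact hpa)).1 haA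
        · exact fun h => Set.mem_image_of_mem _ h
      have hH_le : mincut endsH E (π '' S1) (π '' S2) ≤ (F'.ncard : ℕ∞) := by
        apply sInf_le
        refine ⟨π '' A, ?_, ?_, ?_⟩
        · rintro w ⟨s, hs, rfl⟩
          exact Set.mem_image_of_mem _ (hS1A hs)
        · ext w
          simp only [Set.mem_inter_iff, Set.mem_empty_iff_false, iff_false, not_and]
          rintro ⟨a, haA, rfl⟩ ⟨s, hs, hsa⟩
          have : s ∈ A := (hkey s).1 (hsa ▸ Set.mem_image_of_mem _ haA)
          have : s ∈ A ∩ S2 := ⟨this, hs⟩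
          rw [hAS2] at this
          exact this
        · have hbd : bdry endsH E (π '' A) = bdry ends E A := by
            ext e
            simp only [bdry, crosses, Set.mem_setOf_eq, hendsH, hkey]
          rw [hbd, hbdry, hFcard]
      have heq : mincut endsH E (π '' S1) (π '' S2) = mincut ends E S1 S2 :=
        le_antisymm (hH_le.trans (le_of_eq hFcard)) hle
      rw [heq]
    · push_neg at hc
      rw [min_eq_left hc.le, min_eq_left (hc.le.trans hle)]
  · have hconnW : ∀ w1 w2 : Quotient (Relation.EqvGen.setoid r),
        Relation.ReflTransGen (fun a b => ∃ e ∈ F,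
          (fun e => (π (ends e).1, π (ends e).2)) e = (a, b) ∨
          (fun e => (π (ends e).1, π (ends e).2)) e = (b, a)) w1 w2 := by
      have hmap : ∀ u v : V, Relation.ReflTransGen (adj ends E) u v →
          Relation.ReflTransGen (fun a b => ∃ e ∈ F,
            (fun e => (π (ends e).1, π (ends e).2)) e = (a, b) ∨
            (fun e => (π (ends e).1, π (ends e).2)) e = (b, a)) (π u) (π v) := by
        intro u v h
        induction h with
        | refl => exact .refl
        | @tail p q h1 step ih =>
          refine ih.trans ?_
          obtain ⟨e, heE, hends⟩ := step
          by_cases heF : e ∈ F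
          · refine Relation.ReflTransGen.single ⟨e, heF, ?_⟩
            rcases hends with h | h
            · left; show (π (ends e).1, π (ends e).2) = _; rw [h]
            · right; show (π (ends e).1, π (ends e).2) = _; rw [h]
          · have hpq : π p = π q := by
              rcases hends with h | h
              · exact Quotient.sound (Relation.EqvGen.rel _ _ ⟨e, ⟨heE, heF⟩, h⟩)
              · exact Quotient.sound (Relation.EqvGen.symm _ _
                  (Relation.EqvGen.rel _ _ ⟨e, ⟨heE, heF⟩, h⟩))
            rw [← hpq]
      intro w1 w2
      obtain ⟨a, rfl⟩ := Quotient.exists_rep w1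
      obtain ⟨b, rfl⟩ := Quotient.exists_rep w2
      exact hmap a b (hconn a b)
    exact card_le_of_conn (Nat.card (Quotient (Relation.EqvGen.setoid r)))
      (Quotient (Relation.EqvGen.setoid r)) le_rfl
      (fun e => (π (ends e).1, π (ends e).2)) F hconnW
end

section
/- Let G be a connected multigraph with terminal set S, |S| ≥ 4, such that every vertex of G contains at least one terminal class after contracting all non-cut edges of a minimum terminal cut, and suppose G is a multistar: a center vertex r adjacent (possibly with multiedges) to leaf vertices, each leaf containing exactly one terminal. Then for any partition S = S₁ ⊎ S₂ realized by a cut whose edge set is E(G), the union of the minimum isolating cuts of the individual leaf terminals realizes every minimum (S₁, S₂)-cut of the same size. -/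
open Set Relation

/-- star case of the isolating-cut lemma: let `G` be a multistar on
vertex set `Option L` (center `none`, leaves `some ℓ`, every edge joining the center to a
leaf, possibly with multiplicity), with every vertex a terminal (each leaf holding exactly
one terminal, the center possibly several) and at least `4` terminals.  Then for any
partition of the terminals `S₁ ⊎ S₂ = V` with the center on the `S₂` side, the boundary of
each `S₁`-leaf is a minimum cut isolating that leaf-terminal, the boundary `∂(S₁)` is
exactly the union of these minimum leaf-isolating cuts, and this union realizes the
minimum `(S₁, S₂)`-cut, having the same size. -/
theorem star_cut_is_union_of_isolating_cuts {L ι : Type*} [Finite L] [Finite ι]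
    (ends : ι → Option L × Option L) (E : Set ι)
    (hstar : ∀ e ∈ E, ((ends e).1 = none ∧ (ends e).2 ≠ none) ∨
      ((ends e).2 = none ∧ (ends e).1 ≠ none))
    (hS : 4 ≤ Nat.card (Option L))
    (S1 S2 : Set (Option L)) (hpart : S1 ∪ S2 = Set.univ) (hdisj : Disjoint S1 S2)
    (hcenter : (none : Option L) ∈ S2) :
    (∀ ℓ : L, some ℓ ∈ S1 →
      ((bdry ends E {some ℓ}).ncard : ℕ∞) =
        mincut ends E {some ℓ} (Set.univ \ {some ℓ})) ∧
    bdry ends E S1 = ⋃ ℓ ∈ {ℓ : L | some ℓ ∈ S1}, bdry ends E {some ℓ} ∧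
    mincut ends E S1 S2 = ((bdry ends E S1).ncard : ℕ∞) := by

  have hnone1 : (none : Option L) ∉ S1 := fun h => (Set.disjoint_left.mp hdisj h) hcenter
  refine ⟨?_, ?_, ?_⟩
  · intro ℓ hℓ
    have hset : {n : ℕ∞ | ∃ A : Set (Option L), {some ℓ} ⊆ A ∧
        A ∩ (Set.univ \ {some ℓ}) = ∅ ∧ n = ((bdry ends E A).ncard : ℕ∞)} =
        {((bdry ends E {some ℓ}).ncard : ℕ∞)} := by
      ext n
      constructor
      · rintro ⟨A, hsub, hdis, rfl⟩
        have hA : A = {some ℓ} := by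
          apply Set.Subset.antisymm _ hsub
          intro a ha
          by_contra hne
          have : a ∈ A ∩ (Set.univ \ {some ℓ}) := ⟨ha, Set.mem_univ a, hne⟩
          rw [hdis] at this
          exact this
        rw [hA]; rfl
      · rintro rfl
        exact ⟨{some ℓ}, subset_rfl, by ext a; simp, rfl⟩
    rw [mincut, hset, sInf_singleton]
  · ext e
    simp only [bdry, crosses, Set.mem_setOf_eq, Set.mem_iUnion, Set.mem_singleton_iff]
    constructor
    · rintro ⟨he, hc⟩
      rcases hstar e he with ⟨h1, h2⟩ | ⟨h2, h1⟩
      · rcases hc with ⟨ha, _⟩ | ⟨_, hb⟩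
        · exact absurd (h1 ▸ ha) hnone1
        · obtain ⟨ℓ, hℓ⟩ := Option.ne_none_iff_exists'.mp h2
          exact ⟨ℓ, hℓ ▸ hb, he, Or.inr ⟨by simp [h1], by simp [hℓ]⟩⟩
      · rcases hc with ⟨ha, _⟩ | ⟨_, hb⟩
        · obtain ⟨ℓ, hℓ⟩ := Option.ne_none_iff_exists'.mp h1
          exact ⟨ℓ, hℓ ▸ ha, he, Or.inl ⟨by simp [hℓ], by simp [h2]⟩⟩
        · exact absurd (h2 ▸ hb) hnone1
    · rintro ⟨ℓ, hℓ, he, hc⟩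
      refine ⟨he, ?_⟩
      rcases hc with ⟨ha, hb⟩ | ⟨ha, hb⟩
      · exact Or.inl ⟨ha ▸ hℓ, fun hb2 => by
          rcases hstar e he with ⟨h1, _⟩ | ⟨h2, _⟩
          · exact (by simp [h1] at ha)
          · exact hnone1 (h2 ▸ hb2)⟩
      · exact Or.inr ⟨fun ha2 => by
          rcases hstar e he with ⟨h1, _⟩ | ⟨h2, _⟩
          · exact hnone1 (h1 ▸ ha2)
          · exact (by simp [h2] at hb), hb ▸ hℓ⟩
  · have hset : {n : ℕ∞ | ∃ A : Set (Option L), S1 ⊆ A ∧ A ∩ S2 = ∅ ∧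
        n = ((bdry ends E A).ncard : ℕ∞)} = {((bdry ends E S1).ncard : ℕ∞)} := by
      ext n
      constructor
      · rintro ⟨A, hsub, hdis, rfl⟩
        have hA : A = S1 := by
          apply Set.Subset.antisymm _ hsub
          intro a ha
          have := hpart ▸ Set.mem_univ a
          rcases this with h | h
          · exact h
          · have : a ∈ A ∩ S2 := ⟨ha, h⟩
            rw [hdis] at this
            exact this.elim
        rw [hA]; rfl
      · rintro rfl
        exact ⟨S1, subset_rfl, Set.disjoint_iff_inter_eq_empty.mp hdisj, rfl⟩
    rw [mincut, hset, sInf_singleton]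
end

section
/- Let T be a tree on at least 3 vertices in which every vertex contains at least one terminal (a weight function w: V(T) → ℕ with w(v) ≥ 1 for all v, and total weight |S| ≥ 4), such that deleting any edge of T yields two components each of total weight ≤ 1 on at least one side (no edge deletion gives both sides weight ≥ 2). Then T is a star: there is a center r such that every other vertex is a leaf adjacent to r with weight exactly 1. -/
open Finset

lemma side_singleton {V : Type*} [Fintype V] (w : V → ℕ) (hw : ∀ v, 1 ≤ w v)
    (S : Set V) (a : V) (ha : a ∈ S) (hle : ∑ᶠ v ∈ S, w v ≤ 1) :
    (∀ u ∈ S, u = a) ∧ w a = 1 := by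
  classical
  rw [← Set.coe_toFinset S, finsum_mem_coe_finset] at hle
  have hall : ∀ u ∈ S, u = a := by
    intro u hu
    by_contra hne
    have hsub : ({a, u} : Finset V) ⊆ S.toFinset := by
      intro x hx
      simp only [Finset.mem_insert, Finset.mem_singleton] at hx
      rcases hx with rfl | rfl <;> simpa [Set.mem_toFinset]
    have h2 : w a + w u ≤ ∑ v ∈ S.toFinset, w v := by
      rw [← Finset.sum_pair (Ne.symm hne)]
      exact Finset.sum_le_sum_of_subset hsub
    have := hw a; have := hw u; omega
  refine ⟨hall, ?_⟩
  have hS : S.toFinset = {a} := by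
    ext x
    simp only [Set.mem_toFinset, Finset.mem_singleton]
    exact ⟨fun hx => hall x hx, fun hx => hx ▸ ha⟩
  rw [hS, Finset.sum_singleton] at hle
  have := hw a; omega

/-- tree-structure lemma: let `G` be a tree on at least `3` vertices
with a vertex weight function `w` (the number of terminals at each vertex) satisfying
`w v ≥ 1` for all `v` and total weight at least `4`.  Suppose that deleting any edge of
the tree leaves total weight at most `1` on at least one of the two resulting components
(no edge splits the weight `≥ 2` / `≥ 2`).  Then the tree is a star: there is a center `r`
such that every other vertex is a leaf (its unique neighbour is `r`) adjacent to `r`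
of weight exactly `1`. -/
theorem tree_no_balanced_edge_is_star {V : Type*} [Fintype V]
    (G : SimpleGraph V) (hT : G.IsTree) (h3 : 3 ≤ Fintype.card V)
    (w : V → ℕ) (hw : ∀ v, 1 ≤ w v) (hsum : 4 ≤ ∑ᶠ v, w v)
    (hno : ∀ a b : V, G.Adj a b →
      (∑ᶠ v ∈ {v | (G.deleteEdges {s(a, b)}).Reachable a v}, w v) ≤ 1 ∨
      (∑ᶠ v ∈ {v | (G.deleteEdges {s(a, b)}).Reachable b v}, w v) ≤ 1) :
    ∃ r : V, ∀ v : V, v ≠ r → G.Adj r v ∧ w v = 1 ∧ ∀ u : V, G.Adj v u → u = r := by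
  classical
  have hconn := hT.isConnected
  -- key: if the `a`-side of edge `a-b` has weight ≤ 1, then `a` is a leaf of weight 1
  have key : ∀ a b : V, G.Adj a b →
      (∑ᶠ v ∈ {v | (G.deleteEdges {s(a, b)}).Reachable a v}, w v) ≤ 1 →
      (w a = 1 ∧ ∀ u, G.Adj a u → u = b) := by
    intro a b hab hle
    have ha : a ∈ {v | (G.deleteEdges {s(a, b)}).Reachable a v} := by
      exact SimpleGraph.Reachable.refl a
    obtain ⟨hall, hwa⟩ := side_singleton w hw _ a ha hle
    refine ⟨hwa, fun u hu => ?_⟩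
    by_contra hub
    have hadj : (G.deleteEdges {s(a, b)}).Adj a u := by
      rw [SimpleGraph.deleteEdges_adj]
      refine ⟨hu, ?_⟩
      simp only [Set.mem_singleton_iff, Sym2.eq, Sym2.rel_iff', Prod.mk.injEq, Prod.swap_prod_mk]
      push_neg
      exact ⟨fun _ => hub, fun h _ => hab.ne h⟩
    have := hall u hadj.reachable
    exact hu.ne' this
  -- dichotomy: every edge has a weight-1 leaf endpoint
  have dich : ∀ a b : V, G.Adj a b →
      (w a = 1 ∧ ∀ u, G.Adj a u → u = b) ∨ (w b = 1 ∧ ∀ u, G.Adj b u → u = a) := by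
    intro a b hab
    rcases hno a b hab with h | h
    · exact Or.inl (key a b hab h)
    · refine Or.inr (key b a hab.symm ?_)
      rw [Sym2.eq_swap]
      exact h
  -- find a vertex with two distinct neighbours
  have exists_center : ∃ r u₁ u₂ : V, u₁ ≠ u₂ ∧ G.Adj r u₁ ∧ G.Adj r u₂ := by
    -- first, get an edge
    obtain ⟨a, b, hab0⟩ := Fintype.exists_pair_of_one_lt_card (α := V) (by omega)
    obtain ⟨p0⟩ := hconn.preconnected a b
    obtain ⟨m, ℓ, hmℓ, hleaf⟩ : ∃ m ℓ : V, G.Adj m ℓ ∧ (∀ u, G.Adj ℓ u → u = m) := by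
      cases p0 with
      | nil => exact absurd rfl hab0
      | cons h q =>
        rcases dich _ _ h with ⟨_, hl⟩ | ⟨_, hl⟩
        · exact ⟨_, _, h.symm, hl⟩
        · exact ⟨_, _, h, hl⟩
    obtain ⟨c, hc⟩ : ∃ c, c ∉ ({ℓ, m} : Finset V) := by
      by_contra h
      push_neg at h
      have hsub : (Finset.univ : Finset V) ⊆ {ℓ, m} := fun x _ => h x
      have := Finset.card_le_card hsub
      have h2 : ({ℓ, m} : Finset V).card ≤ 2 :=
        (Finset.card_insert_le _ _).trans (by simp)
      rw [Finset.card_univ] at this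
      omega
    simp only [Finset.mem_insert, Finset.mem_singleton] at hc
    push_neg at hc
    obtain ⟨p1⟩ := hconn.preconnected m c
    have hp : p1.bypass.IsPath := SimpleGraph.Walk.bypass_isPath p1
    cases hq : p1.bypass with
    | nil => exact absurd rfl (Ne.symm hc.2)
    | @cons _ x _ h q =>
      by_cases hx : x = ℓ
      · subst hx
        exfalso
        cases q with
        | nil => exact hc.1 rfl
        | cons h2 q2 =>
          have hy := hleaf _ h2
          subst hy
          rw [hq] at hp
          have hnd := hp.support_nodup
          simp only [SimpleGraph.Walk.support_cons, List.nodup_cons] at hnd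
          exact hnd.1 (by simp [SimpleGraph.Walk.start_mem_support])
      · exact ⟨m, ℓ, x, fun hh => hx hh.symm, hmℓ, h⟩
  obtain ⟨r, u₁, u₂, hu12, h1, h2⟩ := exists_center
  -- every neighbour of r is a weight-1 leaf
  have leafnbr : ∀ v, G.Adj r v → w v = 1 ∧ ∀ u, G.Adj v u → u = r := by
    intro v hv
    rcases dich r v hv with ⟨_, hall⟩ | h
    · exact absurd ((hall u₁ h1).trans (hall u₂ h2).symm) hu12
    · exact h
  refine ⟨r, fun v hvr => ?_⟩
  obtain ⟨p⟩ := hconn.preconnected r v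
  have hp : p.bypass.IsPath := SimpleGraph.Walk.bypass_isPath p
  cases hq : p.bypass with
  | nil => exact absurd rfl (Ne.symm hvr)
  | @cons _ x _ h q =>
    obtain ⟨hwx, hlx⟩ := leafnbr x h
    cases q with
    | nil => exact ⟨h, hwx, hlx⟩
    | cons h2 q2 =>
      exfalso
      have hy := hlx _ h2
      subst hy
      rw [hq] at hp
      have hnd := hp.support_nodup
      simp only [SimpleGraph.Walk.support_cons, List.nodup_cons] at hnd
      exact hnd.1 (by simp [SimpleGraph.Walk.start_mem_support])
end
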